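/- Let a_1, …, a_ℓ, C, b be positive integers. Let G be the undirected graph with vertex set {s, t, B_1, …, B_b} and edges sB_j and B_jt for each j ∈ {1,…,b}, together with the edge st; all edges have length 1 and capacity C. Consider the ℓ + 1 demands (s, t, a_1), …, (s, t, a_ℓ) and the dummy demand (s, t, C). Then the following are equivalent: (a) there is, for each demand, a walk from s to t in G that is a concatenation of at most 2 unique-shortest-path segments, such that for every edge e of G the sum of the volumes of the demands whose walk traverses e (counted with multiplicity) is at most C; (b) the multiset {a_1, …, a_ℓ} can be partitioned into b parts (some possibly empty) each of sum at most C. -/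

import Mathlib

/-- The number of occurrences of `a` in the list `l` (counted with multiplicity). -/
noncomputable def cnt {α : Type*} (a : α) (l : List α) : ℕ :=
  letI := Classical.decEq α
  l.count a

/-- `ConcatUSP G j w`: the walk `w` is a concatenation of (exactly) `j` consecutive
subwalks, each of which is the unique shortest path in `G` between its endpoints. -/
inductive ConcatUSP {V : Type*} (G : SimpleGraph V) : ℕ → ∀ {x y : V}, G.Walk x y → Prop
  | nil {x : V} : ConcatUSP G 0 (SimpleGraph.Walk.nil : G.Walk x x)
  | cons {j : ℕ} {x y z : V} (p : G.Walk x y) (q : G.Walk y z)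
      (hp : p.length = G.dist x y)
      (hu : ∀ p' : G.Walk x y, p'.length = G.dist x y → p' = p)
      (hq : ConcatUSP G j q) : ConcatUSP G (j + 1) (p.append q)

/-- The graph of Statement 9: vertices `s = Sum.inr false`, `t = Sum.inr true` and
`B_1, …, B_b` (encoded `Sum.inl j` for `j : Fin b`), with edges `s B_j`, `B_j t` for every
`j`, and the edge `s t`. -/
def binG (b : ℕ) : SimpleGraph (Fin b ⊕ Bool) where
  Adj x y :=
    match x, y with
    | Sum.inl _, Sum.inr _ => True
    | Sum.inr _, Sum.inl _ => True
    | Sum.inr x, Sum.inr y => x ≠ y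
    | Sum.inl _, Sum.inl _ => False
  symm := by
    constructor
    rintro (u | u) (v | v) h
    · exact h
    · trivial
    · trivial
    · exact Ne.symm h
  loopless := by
    constructor
    rintro (u | u) h
    · exact h
    · exact h rfl

open SimpleGraph

lemma cnt_nil' {α : Type*} (a : α) : cnt a ([] : List α) = 0 := by simp [cnt]

lemma cnt_cons' {α : Type*} [DecidableEq α] (a x : α) (l : List α) :
    cnt a (x :: l) = cnt a l + (if x = a then 1 else 0) := by
  simp only [cnt, List.count_cons]
  congr 1
  simp [beq_iff_eq]

lemma cnt_single {α : Type*} [DecidableEq α] (a x : α) :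
    cnt a [x] = if x = a then 1 else 0 := by
  rw [cnt_cons', cnt_nil', Nat.zero_add]

lemma cnt_pair {α : Type*} [DecidableEq α] (a x y : α) :
    cnt a [x, y] = (if x = a then 1 else 0) + (if y = a then 1 else 0) := by
  rw [cnt_cons', cnt_single, Nat.add_comm]

section cntcompute
variable {b : ℕ} (k j : Fin b)

lemma cnt_e0_pair : cnt (s(Sum.inr false, Sum.inr true) : Sym2 (Fin b ⊕ Bool))
    [s(Sum.inr false, Sum.inl j), s(Sum.inl j, Sum.inr true)] = 0 := by
  rw [cnt_pair]; simp [Sym2.eq_iff]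

lemma cnt_e0r_pair : cnt (s(Sum.inr true, Sum.inr false) : Sym2 (Fin b ⊕ Bool))
    [s(Sum.inr false, Sum.inl j), s(Sum.inl j, Sum.inr true)] = 0 := by
  rw [cnt_pair]; simp [Sym2.eq_iff]

lemma cnt_e1_pair : cnt (s(Sum.inr false, Sum.inl k) : Sym2 (Fin b ⊕ Bool))
    [s(Sum.inr false, Sum.inl j), s(Sum.inl j, Sum.inr true)] = if j = k then 1 else 0 := by
  rw [cnt_pair]
  by_cases h : j = k
  · subst h; simp [Sym2.eq_iff]
  · simp [Sym2.eq_iff, h]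

lemma cnt_e1r_pair : cnt (s(Sum.inl k, Sum.inr false) : Sym2 (Fin b ⊕ Bool))
    [s(Sum.inr false, Sum.inl j), s(Sum.inl j, Sum.inr true)] = if j = k then 1 else 0 := by
  rw [cnt_pair]
  by_cases h : j = k
  · subst h; simp [Sym2.eq_iff]
  · simp [Sym2.eq_iff, h]

lemma cnt_e2_pair : cnt (s(Sum.inl k, Sum.inr true) : Sym2 (Fin b ⊕ Bool))
    [s(Sum.inr false, Sum.inl j), s(Sum.inl j, Sum.inr true)] = if j = k then 1 else 0 := by
  rw [cnt_pair]
  by_cases h : j = k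
  · subst h; simp [Sym2.eq_iff]
  · simp [Sym2.eq_iff, h]

lemma cnt_e2r_pair : cnt (s(Sum.inr true, Sum.inl k) : Sym2 (Fin b ⊕ Bool))
    [s(Sum.inr false, Sum.inl j), s(Sum.inl j, Sum.inr true)] = if j = k then 1 else 0 := by
  rw [cnt_pair]
  by_cases h : j = k
  · subst h; simp [Sym2.eq_iff]
  · simp [Sym2.eq_iff, h]

lemma cnt_e0_single : cnt (s(Sum.inr false, Sum.inr true) : Sym2 (Fin b ⊕ Bool))
    [s(Sum.inr false, Sum.inr true)] = 1 := by
  rw [cnt_single]; simp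

lemma cnt_e0r_single : cnt (s(Sum.inr true, Sum.inr false) : Sym2 (Fin b ⊕ Bool))
    [s(Sum.inr false, Sum.inr true)] = 1 := by
  rw [cnt_single]; simp [Sym2.eq_iff]

lemma cnt_e1_single : cnt (s(Sum.inr false, Sum.inl k) : Sym2 (Fin b ⊕ Bool))
    [s(Sum.inr false, Sum.inr true)] = 0 := by
  rw [cnt_single]; simp [Sym2.eq_iff]

lemma cnt_e1r_single : cnt (s(Sum.inl k, Sum.inr false) : Sym2 (Fin b ⊕ Bool))
    [s(Sum.inr false, Sum.inr true)] = 0 := by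
  rw [cnt_single]; simp [Sym2.eq_iff]

lemma cnt_e2_single : cnt (s(Sum.inl k, Sum.inr true) : Sym2 (Fin b ⊕ Bool))
    [s(Sum.inr false, Sum.inr true)] = 0 := by
  rw [cnt_single]; simp [Sym2.eq_iff]

lemma cnt_e2r_single : cnt (s(Sum.inr true, Sum.inl k) : Sym2 (Fin b ⊕ Bool))
    [s(Sum.inr false, Sum.inr true)] = 0 := by
  rw [cnt_single]; simp [Sym2.eq_iff]

end cntcompute

lemma adj_st {b : ℕ} : (binG b).Adj (Sum.inr false) (Sum.inr true) := Bool.false_ne_true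
lemma adj_sB {b : ℕ} (c : Bool) (k : Fin b) : (binG b).Adj (Sum.inr c) (Sum.inl k) := trivial
lemma adj_Bt {b : ℕ} (k : Fin b) (c : Bool) : (binG b).Adj (Sum.inl k) (Sum.inr c) := trivial

lemma length_one_char {V : Type*} {G : SimpleGraph V} {x y : V} (p : G.Walk x y)
    (h : p.length = 1) : ∃ h' : G.Adj x y, p = SimpleGraph.Walk.cons h' SimpleGraph.Walk.nil := by
  cases p with
  | nil => simp at h
  | cons h' q =>
    cases q with
    | nil => exact ⟨h', rfl⟩
    | cons h'' q' => simp [SimpleGraph.Walk.length_cons] at h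

lemma usp_of_adj {V : Type*} {G : SimpleGraph V} {x y : V} (h : G.Adj x y) :
    (SimpleGraph.Walk.cons h SimpleGraph.Walk.nil).length = G.dist x y ∧
    ∀ p' : G.Walk x y, p'.length = G.dist x y →
      p' = SimpleGraph.Walk.cons h SimpleGraph.Walk.nil := by
  have hd : G.dist x y = 1 := (dist_eq_one_iff_adj).2 h
  refine ⟨by simp [hd], fun p' hp' => ?_⟩
  obtain ⟨h2, rfl⟩ := length_one_char p' (by rw [hp', hd])
  rfl

lemma concat1_adj {V : Type*} {G : SimpleGraph V} {x y : V} (h : G.Adj x y) :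
    ConcatUSP G 1 (SimpleGraph.Walk.cons h SimpleGraph.Walk.nil) := by
  have := ConcatUSP.cons (SimpleGraph.Walk.cons h SimpleGraph.Walk.nil)
    SimpleGraph.Walk.nil (usp_of_adj h).1 (usp_of_adj h).2 ConcatUSP.nil
  simpa using this

lemma concat2_adj {V : Type*} {G : SimpleGraph V} {x y z : V} (h1 : G.Adj x y) (h2 : G.Adj y z) :
    ConcatUSP G 2 (SimpleGraph.Walk.cons h1 (SimpleGraph.Walk.cons h2 SimpleGraph.Walk.nil)) := by
  have := ConcatUSP.cons (SimpleGraph.Walk.cons h1 SimpleGraph.Walk.nil)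
    (SimpleGraph.Walk.cons h2 SimpleGraph.Walk.nil) (usp_of_adj h1).1 (usp_of_adj h1).2
    (concat1_adj h2)
  simpa using this

lemma walk_char {b j : ℕ} (hj : j ≤ 2) (W : (binG b).Walk (Sum.inr false) (Sum.inr true))
    (hW : ConcatUSP (binG b) j W) :
    W.edges = [s(Sum.inr false, Sum.inr true)] ∨
    ∃ k : Fin b, W.edges = [s(Sum.inr false, Sum.inl k), s(Sum.inl k, Sum.inr true)] := by
  interval_cases j
  · cases hW
  · cases hW with
    | cons p q hp hu hq =>
      cases hq
      rw [dist_eq_one_iff_adj.2 adj_st] at hp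
      obtain ⟨h', rfl⟩ := length_one_char p hp
      left; simp
  · cases hW with
    | cons p q hp hu hq =>
      rename_i y
      cases hq with
      | cons p₂ q₂ hp₂ hu₂ hq₂ =>
        cases hq₂
        rcases y with k | c
        · rw [dist_eq_one_iff_adj.2 (adj_sB false k)] at hp
          rw [dist_eq_one_iff_adj.2 (adj_Bt k true)] at hp₂
          obtain ⟨h1, rfl⟩ := length_one_char p hp
          obtain ⟨h2, rfl⟩ := length_one_char p₂ hp₂
          right; exact ⟨k, by simp⟩
        · cases c
          · rw [SimpleGraph.dist_self] at hp
            cases p with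
            | nil =>
              rw [dist_eq_one_iff_adj.2 adj_st] at hp₂
              obtain ⟨h2, rfl⟩ := length_one_char p₂ hp₂
              left; simp
            | cons h' q' => simp at hp
          · rw [SimpleGraph.dist_self] at hp₂
            cases p₂ with
            | nil =>
              rw [dist_eq_one_iff_adj.2 adj_st] at hp
              obtain ⟨h1, rfl⟩ := length_one_char p hp
              left; simp
            | cons h' q' => simp at hp₂

lemma sum_filter_le {n C : ℕ} (a c : Fin n → ℕ) (P : Fin n → Prop) [DecidablePred P]
    (h1 : ∀ i, P i → 1 ≤ c i) (h2 : ∑ i, a i * c i ≤ C) :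
    ∑ i ∈ Finset.univ.filter P, a i ≤ C := by
  calc ∑ i ∈ Finset.univ.filter P, a i
      ≤ ∑ i ∈ Finset.univ.filter P, a i * c i := by
        refine Finset.sum_le_sum fun i hi => ?_
        have := h1 i (Finset.mem_filter.mp hi).2
        exact Nat.le_mul_of_pos_right _ this
    _ ≤ ∑ i, a i * c i := Finset.sum_le_sum_of_subset (Finset.filter_subset _ _)
    _ ≤ C := h2

lemma sum_mul_ite_le {n C : ℕ} {β : Type*} [DecidableEq β] (a : Fin n → ℕ) (g : Fin n → β)
    (k : β) (h : ∑ i ∈ Finset.univ.filter (fun i => g i = k), a i ≤ C) :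
    ∑ i : Fin n, a i * (if g i = k then 1 else 0) ≤ C := by
  calc ∑ i : Fin n, a i * (if g i = k then 1 else 0)
      = ∑ i : Fin n, (if g i = k then a i else 0) := by
        refine Finset.sum_congr rfl fun i _ => ?_
        split <;> simp
    _ = ∑ i ∈ Finset.univ.filter (fun i => g i = k), a i := (Finset.sum_filter _ _).symm
    _ ≤ C := h

/-- with all edges of capacity `C`, the demands `(s, t, a_1), …, (s, t, a_ℓ)`
together with the dummy demand `(s, t, C)` can each be routed along a walk from `s` to `t`
that is a concatenation of at most 2 unique-shortest-path segments, so that on every edge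
the total routed volume is at most `C`, iff the multiset `{a_1, …, a_ℓ}` can be partitioned
into `b` (possibly empty) parts each of sum at most `C`. -/
theorem stmt9 (ℓ b C : ℕ) (hb : 0 < b) (hC : 0 < C)
    (a : Fin ℓ → ℕ) (ha : ∀ i, 0 < a i) :
    (∃ (W : Fin ℓ → (binG b).Walk (Sum.inr false) (Sum.inr true))
       (Wd : (binG b).Walk (Sum.inr false) (Sum.inr true)),
      (∀ i, ∃ j ≤ 2, ConcatUSP (binG b) j (W i)) ∧
      (∃ j ≤ 2, ConcatUSP (binG b) j Wd) ∧
      (∀ e ∈ (binG b).edgeSet,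
        (∑ i : Fin ℓ, a i * cnt e (W i).edges) + C * cnt e Wd.edges ≤ C)) ↔
    (∃ f : Fin ℓ → Fin b,
      ∀ j : Fin b, (∑ i ∈ Finset.univ.filter (fun i => f i = j), a i) ≤ C) := by
  classical
  constructor
  · rintro ⟨W, Wd, hW, ⟨jd, hjd, hWd⟩, hcap⟩
    have hchar : ∀ i, (W i).edges = [s(Sum.inr false, Sum.inr true)] ∨
        ∃ k : Fin b, (W i).edges = [s(Sum.inr false, Sum.inl k), s(Sum.inl k, Sum.inr true)] := by
      intro i; obtain ⟨j, hj, hc⟩ := hW i; exact walk_char hj _ hc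
    rcases walk_char hjd Wd hWd with hd | ⟨k0, hd⟩
    · -- dummy on the edge st
      have hcap0 := hcap (s(Sum.inr false, Sum.inr true)) ((mem_edgeSet _).mpr adj_st)
      rw [hd, cnt_e0_single, mul_one] at hcap0
      have hsum0 : ∑ i : Fin ℓ, a i * cnt (s(Sum.inr false, Sum.inr true)) (W i).edges = 0 := by
        omega
      have hvia : ∀ i, ∃ k : Fin b,
          (W i).edges = [s(Sum.inr false, Sum.inl k), s(Sum.inl k, Sum.inr true)] := by
        intro i
        rcases hchar i with h | h
        · exfalso
          have h0 := (Finset.sum_eq_zero_iff.mp hsum0) i (Finset.mem_univ i)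
          rw [h, cnt_e0_single, mul_one] at h0
          have := ha i; omega
        · exact h
      choose f hf using hvia
      refine ⟨f, fun j => ?_⟩
      have hcapj := hcap (s(Sum.inr false, Sum.inl j)) ((mem_edgeSet _).mpr (adj_sB false j))
      rw [hd, cnt_e1_single, mul_zero, add_zero] at hcapj
      refine sum_filter_le a (fun i => cnt (s(Sum.inr false, Sum.inl j)) (W i).edges) _
        ?_ hcapj
      intro i hi
      show 1 ≤ cnt (s(Sum.inr false, Sum.inl j)) (W i).edges
      rw [hf i, cnt_e1_pair, if_pos hi]
    · -- dummy via B_{k0}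
      have hcap1 := hcap (s(Sum.inr false, Sum.inl k0)) ((mem_edgeSet _).mpr (adj_sB false k0))
      rw [hd, cnt_e1_pair, if_pos rfl, mul_one] at hcap1
      have hsum0 : ∑ i : Fin ℓ, a i * cnt (s(Sum.inr false, Sum.inl k0)) (W i).edges = 0 := by
        omega
      have hzero : ∀ i, cnt (s(Sum.inr false, Sum.inl k0)) (W i).edges = 0 := by
        intro i
        have h0 := (Finset.sum_eq_zero_iff.mp hsum0) i (Finset.mem_univ i)
        rcases Nat.mul_eq_zero.mp h0 with h | h
        · have := ha i; omega
        · exact h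
      set f : Fin ℓ → Fin b := fun i =>
        if h : ∃ k : Fin b,
            (W i).edges = [s(Sum.inr false, Sum.inl k), s(Sum.inl k, Sum.inr true)]
        then h.choose else k0 with hfdef
      have hcase : ∀ i, ((W i).edges = [s(Sum.inr false, Sum.inr true)] ∧ f i = k0) ∨
          ((W i).edges = [s(Sum.inr false, Sum.inl (f i)), s(Sum.inl (f i), Sum.inr true)] ∧
            f i ≠ k0) := by
        intro i
        rcases hchar i with h | ⟨k, hk⟩
        · left
          refine ⟨h, ?_⟩
          rw [hfdef]
          dsimp only
          rw [dif_neg]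
          rintro ⟨k, hk⟩
          rw [h] at hk
          simp at hk
        · right
          have hex : ∃ k : Fin b,
              (W i).edges = [s(Sum.inr false, Sum.inl k), s(Sum.inl k, Sum.inr true)] := ⟨k, hk⟩
          have hfi : f i = hex.choose := by rw [hfdef]; dsimp only; rw [dif_pos hex]
          have hspec := hex.choose_spec
          refine ⟨by rw [hfi]; exact hspec, ?_⟩
          intro hcon
          have hz := hzero i
          rw [hfi] at hcon
          rw [hspec, cnt_e1_pair, if_pos hcon] at hz
          omega
      refine ⟨f, fun j => ?_⟩
      by_cases hj : j = k0
      · subst hj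
        have he := hcap (s(Sum.inr false, Sum.inr true)) ((mem_edgeSet _).mpr adj_st)
        rw [hd, cnt_e0_pair, mul_zero, add_zero] at he
        refine sum_filter_le a (fun i => cnt (s(Sum.inr false, Sum.inr true)) (W i).edges) _
          ?_ he
        intro i hi
        show 1 ≤ cnt (s(Sum.inr false, Sum.inr true)) (W i).edges
        rcases hcase i with ⟨h1, _⟩ | ⟨_, h2⟩
        · rw [h1, cnt_e0_single]
        · exact absurd hi h2
      · have he := hcap (s(Sum.inr false, Sum.inl j)) ((mem_edgeSet _).mpr (adj_sB false j))
        rw [hd, cnt_e1_pair, if_neg (fun h => hj h.symm), mul_zero, add_zero] at he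
        refine sum_filter_le a (fun i => cnt (s(Sum.inr false, Sum.inl j)) (W i).edges) _
          ?_ he
        intro i hi
        show 1 ≤ cnt (s(Sum.inr false, Sum.inl j)) (W i).edges
        rcases hcase i with ⟨_, hk⟩ | ⟨h2, _⟩
        · exact absurd (hi ▸ hk) hj
        · rw [h2, cnt_e1_pair, if_pos hi]
  · rintro ⟨f, hf⟩
    refine ⟨fun i => SimpleGraph.Walk.cons (adj_sB false (f i))
        (SimpleGraph.Walk.cons (adj_Bt (f i) true) SimpleGraph.Walk.nil),
      SimpleGraph.Walk.cons adj_st SimpleGraph.Walk.nil, ?_, ?_, ?_⟩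
    · intro i; exact ⟨2, le_refl 2, concat2_adj _ _⟩
    · exact ⟨1, by norm_num, concat1_adj _⟩
    · intro e he
      induction e using Sym2.ind with
      | _ x y =>
        rw [SimpleGraph.mem_edgeSet] at he
        simp only [SimpleGraph.Walk.edges_cons, SimpleGraph.Walk.edges_nil]
        have key : ∀ (e : Sym2 (Fin b ⊕ Bool)) (k : Fin b),
            cnt e [(s(Sum.inr false, Sum.inr true) : Sym2 (Fin b ⊕ Bool))] = 0 →
            (∀ i, cnt e [s(Sum.inr false, Sum.inl (f i)), s(Sum.inl (f i), Sum.inr true)]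
              = if f i = k then 1 else 0) →
            (∑ i : Fin ℓ, a i *
              cnt e [s(Sum.inr false, Sum.inl (f i)), s(Sum.inl (f i), Sum.inr true)])
              + C * cnt e [s(Sum.inr false, Sum.inr true)] ≤ C := by
          intro e k h0 h1
          rw [h0, mul_zero, add_zero]
          calc ∑ i : Fin ℓ, a i *
                cnt e [s(Sum.inr false, Sum.inl (f i)), s(Sum.inl (f i), Sum.inr true)]
              = ∑ i : Fin ℓ, a i * (if f i = k then 1 else 0) :=
                Finset.sum_congr rfl fun i _ => by rw [h1 i]
            _ ≤ C := sum_mul_ite_le a f k (hf k)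
        rcases x with k | c <;> rcases y with k' | c'
        · exact absurd he (by exact id)
        · cases c'
          · exact key _ k (cnt_e1r_single k) fun i => cnt_e1r_pair k (f i)
          · exact key _ k (cnt_e2_single k) fun i => cnt_e2_pair k (f i)
        · cases c
          · exact key _ k' (cnt_e1_single k') fun i => cnt_e1_pair k' (f i)
          · exact key _ k' (cnt_e2r_single k') fun i => cnt_e2r_pair k' (f i)
        · cases c <;> cases c'
          · exact absurd rfl he
          · calc (∑ i : Fin ℓ, a i *
                  cnt (s(Sum.inr false, Sum.inr true) : Sym2 (Fin b ⊕ Bool))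
                    [s(Sum.inr false, Sum.inl (f i)), s(Sum.inl (f i), Sum.inr true)])
                + C * cnt (s(Sum.inr false, Sum.inr true) : Sym2 (Fin b ⊕ Bool))
                    [s(Sum.inr false, Sum.inr true)]
                = 0 + C * 1 := by
                  rw [cnt_e0_single]
                  congr 1
                  exact Finset.sum_eq_zero fun i _ => by rw [cnt_e0_pair, mul_zero]
              _ ≤ C := by omega
          · calc (∑ i : Fin ℓ, a i *
                  cnt (s(Sum.inr true, Sum.inr false) : Sym2 (Fin b ⊕ Bool))
                    [s(Sum.inr false, Sum.inl (f i)), s(Sum.inl (f i), Sum.inr true)])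
                + C * cnt (s(Sum.inr true, Sum.inr false) : Sym2 (Fin b ⊕ Bool))
                    [s(Sum.inr false, Sum.inr true)]
                = 0 + C * 1 := by
                  rw [cnt_e0r_single]
                  congr 1
                  exact Finset.sum_eq_zero fun i _ => by rw [cnt_e0r_pair, mul_zero]
              _ ≤ C := by omega
          · exact absurd rfl he
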